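/- For every integer m ≥ 1, the polynomial x^{m+10} − x^{m+8} − x^{m+7} + x^3 + x^2 − 1 has a unique real root α_m > 1, and the largest eigenvalue of the adjacency matrix of the tree T_{2,3,6+m} equals α_m^{1/2} + α_m^{−1/2}. -/

import Mathlib

/-- Adjacency (as a relation on natural-number labels) of the tree `T_{p+1, q+1, r+1}`
formed from three paths with `p`, `q`, `r` edges joined at the common vertex `0`:
the first arm uses vertices `1, …, p`, the second `p+1, …, p+q`,
the third `p+q+1, …, p+q+r`. -/
def armAdj (p q i j : ℕ) : Prop :=
  (i = 0 ∧ (j = 1 ∨ j = p + 1 ∨ j = p + q + 1)) ∨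
  (j = 0 ∧ (i = 1 ∨ i = p + 1 ∨ i = p + q + 1)) ∨
  (i + 1 = j ∧ i ≠ 0 ∧ j ≠ p + 1 ∧ j ≠ p + q + 1) ∨
  (j + 1 = i ∧ j ≠ 0 ∧ i ≠ p + 1 ∧ i ≠ p + q + 1)

instance (p q i j : ℕ) : Decidable (armAdj p q i j) := by
  unfold armAdj; infer_instance

/-- The real adjacency matrix of the tree `T_{p+1, q+1, r+1}` on `1 + p + q + r` vertices. -/
def treeMatrix (p q r : ℕ) : Matrix (Fin (1 + p + q + r)) (Fin (1 + p + q + r)) ℝ :=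
  Matrix.of fun i j => if armAdj p q (i : ℕ) (j : ℕ) then 1 else 0

namespace T23aux

lemma armAdj_symm (p q i j : ℕ) : armAdj p q i j ↔ armAdj p q j i := by
  unfold armAdj; tauto

lemma center_id (x t X T : ℝ) (hxt : x*t = 1) (hXT : X*T = 1)
    (hR : X^2*(x^20 - x^16 - x^14) + x^6 + x^4 - 1 = 0) :
    (x+t)*((x^2-t^2)*((x^3-t^3)*(x^6*X - t^6*T))) =
      (x-t)*((x^3-t^3)*(x^6*X-t^6*T)) + (x^2-t^2)*((x^2-t^2)*(x^6*X-t^6*T))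
        + (x^2-t^2)*((x^3-t^3)*(x^5*X-t^5*T)) := by
  linear_combination (- 3*t^10*T + x*t^9*T - 2*x*t^11*T - x^2*X + x^2*X^2*T + 3*x^2*t^8*T - x^3*t*X + x^3*t*X^2*T + 2*x^3*t^7*T + x^3*t^9*T + x^4*X - x^4*X^2*T - x^4*t^2*X + x^4*t^2*X^2*T - 2*x^4*t^6*T + x^4*t^8*T + x^4*t^10*T + x^5*t*X - x^5*t*X^2*T - x^5*t^3*X + x^5*t^3*X^2*T - x^5*t^5*T + x^5*t^5*X - x^5*t^7*T + x^5*t^9*T + x^5*t^11*T + x^6*X - x^6*X^2*T + x^6*t^2*X - x^6*t^2*X^2*T + x^6*t^4*X + x^6*t^4*X^2*T - x^6*t^8*T + x^6*t^10*T + x^7*t*X - x^7*t*X^2*T - x^7*t^3*X - x^7*t^3*X^2*T + x^7*t^5*X^2*T - x^7*t^9*T + x^7*t^11*T - 2*x^8*t^2*X - x^8*t^2*X^2*T - x^8*t^4*X^2*T + x^8*t^6*X^2*T - x^8*t^10*T - x^9*t*X - x^9*t^3*X^2*T - x^9*t^5*X^2*T + x^9*t^7*X^2*T - x^9*t^11*T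 + x^10*X + 2*x^10*X^2*T - x^10*t^4*X^2*T - x^10*t^6*X^2*T + x^10*t^8*X^2*T + 2*x^11*t*X^2*T - x^11*t^5*X^2*T - x^11*t^7*X^2*T + x^11*t^9*X^2*T - x^12*X^2*T + 2*x^12*t^2*X^2*T - x^12*t^6*X^2*T - x^12*t^8*X^2*T + x^12*t^10*X^2*T - x^13*t*X^2*T + 2*x^13*t^3*X^2*T - x^13*t^7*X^2*T - x^13*t^9*X^2*T + x^13*t^11*X^2*T - x^14*t^2*X^2*T + 2*x^14*t^4*X^2*T - x^14*t^8*X^2*T - x^14*t^10*X^2*T - x^15*t^3*X^2*T + 2*x^15*t^5*X^2*T - x^15*t^9*X^2*T - x^15*t^11*X^2*T - x^16*t^4*X^2*T + 2*x^16*t^6*X^2*T - x^16*t^10*X^2*T - x^17*t^5*X^2*T + 2*x^17*t^7*X^2*T - x^17*t^11*X^2*T - x^18*t^6*X^2*T + 2*x^18*t^8*X^2*T - x^19*t^7*X^2*T + 2*x^19*t^9*X^2*T - x^20*t^8*X^2*T + 2*x^20*t^10*X^2*T - x^21*t^9*X^2*T + 2*x^21*t^11*X^2*T - x^22*t^10*X^2*T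 - x^23*t^11*X^2*T) * hxt + (x^2*X - x^4*X - x^6*X + 2*x^10*X - x^12*X) * hXT + ((x^2-1)^2*T*t^12) * hR

/-- `s x k = x^k - x⁻¹^k`. -/
noncomputable def s (x : ℝ) (k : ℕ) : ℝ := x^k - (x⁻¹)^k

lemma s_pos {x : ℝ} (hx : 1 < x) {k : ℕ} (hk : 1 ≤ k) : 0 < s x k := by
  have h0 : (0:ℝ) < x := lt_trans one_pos hx
  have h1 : x⁻¹ < 1 := inv_lt_one_of_one_lt₀ hx
  have h2 : (0:ℝ) ≤ x⁻¹ := inv_nonneg.mpr h0.le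
  have h3 : (x⁻¹)^k < 1 := pow_lt_one₀ h2 h1 (by omega)
  have h4 : (1:ℝ) < x^k := one_lt_pow₀ hx (by omega)
  unfold s; linarith

lemma s_rec {x : ℝ} (hx : x ≠ 0) (k : ℕ) :
    (x + x⁻¹) * s x (k+1) = s x (k+2) + s x k := by
  have h : x * x⁻¹ = 1 := mul_inv_cancel₀ hx
  unfold s
  linear_combination (x^k - (x⁻¹)^k) * h

lemma s_zero (x : ℝ) : s x 0 = 0 := by simp [s]

lemma s_one_rec {x : ℝ} (hx : x ≠ 0) : (x + x⁻¹) * s x 1 = s x 2 := by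
  have := s_rec hx 0
  rwa [s_zero, add_zero] at this

lemma sum_one {n : ℕ} (P : ℕ → Prop) [DecidablePred P] (a : ℕ) (f : ℕ → ℝ) (ha : a < n)
    (h : ∀ j, j < n → (P j ↔ j = a)) :
    ∑ j ∈ Finset.range n, (if P j then f j else 0) = f a := by
  have hc : ∀ j ∈ Finset.range n, (if P j then f j else 0) = if j = a then f j else 0 := by
    intro j hj
    rw [Finset.mem_range] at hj
    by_cases hc : P j
    · rw [if_pos hc, if_pos ((h j hj).mp hc)]
    · rw [if_neg hc, if_neg fun hh => hc ((h j hj).mpr hh)]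
  rw [Finset.sum_congr rfl hc, Finset.sum_ite_eq' (Finset.range n) a f,
    if_pos (Finset.mem_range.mpr ha)]

lemma sum_two {n : ℕ} (P : ℕ → Prop) [DecidablePred P] (a b : ℕ) (f : ℕ → ℝ)
    (ha : a < n) (hb : b < n) (hab : a ≠ b)
    (h : ∀ j, j < n → (P j ↔ (j = a ∨ j = b))) :
    ∑ j ∈ Finset.range n, (if P j then f j else 0) = f a + f b := by
  have hc : ∀ j ∈ Finset.range n, (if P j then f j else 0)
      = (if j = a then f j else 0) + (if j = b then f j else 0) := by
    intro j hj
    rw [Finset.mem_range] at hj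
    by_cases hc : P j
    · rcases (h j hj).mp hc with h1 | h1
      · subst h1; rw [if_pos hc, if_pos rfl, if_neg hab, add_zero]
      · subst h1; rw [if_pos hc, if_neg (Ne.symm hab), if_pos rfl, zero_add]
    · rw [if_neg hc, if_neg fun hh => hc ((h j hj).mpr (Or.inl hh)),
        if_neg fun hh => hc ((h j hj).mpr (Or.inr hh)), add_zero]
  rw [Finset.sum_congr rfl hc, Finset.sum_add_distrib,
    Finset.sum_ite_eq' (Finset.range n) a f, Finset.sum_ite_eq' (Finset.range n) b f,
    if_pos (Finset.mem_range.mpr ha), if_pos (Finset.mem_range.mpr hb)]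

lemma sum_three {n : ℕ} (P : ℕ → Prop) [DecidablePred P] (a b c : ℕ) (f : ℕ → ℝ)
    (ha : a < n) (hb : b < n) (hc : c < n) (hab : a ≠ b) (hac : a ≠ c) (hbc : b ≠ c)
    (h : ∀ j, j < n → (P j ↔ (j = a ∨ j = b ∨ j = c))) :
    ∑ j ∈ Finset.range n, (if P j then f j else 0) = f a + f b + f c := by
  have hco : ∀ j ∈ Finset.range n, (if P j then f j else 0)
      = (if j = a then f j else 0) + (if j = b then f j else 0) + (if j = c then f j else 0) := by
    intro j hj
    rw [Finset.mem_range] at hj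
    by_cases hp : P j
    · rcases (h j hj).mp hp with h1 | h1 | h1
      · subst h1; rw [if_pos hp, if_pos rfl, if_neg hab, if_neg hac, add_zero, add_zero]
      · subst h1; rw [if_pos hp, if_neg (Ne.symm hab), if_pos rfl, if_neg hbc, zero_add, add_zero]
      · subst h1; rw [if_pos hp, if_neg (Ne.symm hac), if_neg (Ne.symm hbc), if_pos rfl,
          zero_add, zero_add]
    · rw [if_neg hp, if_neg fun hh => hp ((h j hj).mpr (Or.inl hh)),
        if_neg fun hh => hp ((h j hj).mpr (Or.inr (Or.inl hh))),
        if_neg fun hh => hp ((h j hj).mpr (Or.inr (Or.inr hh))), add_zero, add_zero]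
  rw [Finset.sum_congr rfl hco, Finset.sum_add_distrib, Finset.sum_add_distrib,
    Finset.sum_ite_eq' (Finset.range n) a f, Finset.sum_ite_eq' (Finset.range n) b f,
    Finset.sum_ite_eq' (Finset.range n) c f,
    if_pos (Finset.mem_range.mpr ha), if_pos (Finset.mem_range.mpr hb),
    if_pos (Finset.mem_range.mpr hc)]

/-- The positive eigenvector for the eigenvalue `x + x⁻¹`. -/
lemma key_eig (m : ℕ) (x : ℝ) (hx : 1 < x)
    (hf : (x^2)^(m+10) - (x^2)^(m+8) - (x^2)^(m+7) + (x^2)^3 + (x^2)^2 - 1 = 0) :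
    ∃ v : Fin (1+1+2+(5+m)) → ℝ, (∀ i, 0 < v i) ∧
      (treeMatrix 1 2 (5+m)).mulVec v = (x + x⁻¹) • v := by
  have hx0 : x ≠ 0 := by positivity
  have hxt : x * x⁻¹ = 1 := mul_inv_cancel₀ hx0
  have hXT : x^m * (x⁻¹)^m = 1 := by rw [← mul_pow, hxt, one_pow]
  have hR : (x^m)^2*(x^20 - x^16 - x^14) + x^6 + x^4 - 1 = 0 := by linear_combination hf
  set w : ℕ → ℝ := fun k =>
    if k = 0 then s x 2 * s x 3 * s x (m+6)
    else if k = 1 then s x 1 * s x 3 * s x (m+6)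
    else if k = 2 then s x 2 * s x 2 * s x (m+6)
    else if k = 3 then s x 1 * s x 2 * s x (m+6)
    else s x 2 * s x 3 * s x (9 + m - k) with hwdef
  have hw4 : ∀ k, 4 ≤ k → w k = s x 2 * s x 3 * s x (9 + m - k) := by
    intro k hk
    simp only [hwdef]
    rw [if_neg (by omega), if_neg (by omega), if_neg (by omega), if_neg (by omega)]
  have hw0 : w 0 = s x 2 * s x 3 * s x (m+6) := by norm_num [hwdef]
  have hcenter : s x 1 * s x 3 * s x (m+6) + s x 2 * s x 2 * s x (m+6)
      + s x 2 * s x 3 * s x (5+m) = (x + x⁻¹) * (s x 2 * s x 3 * s x (m+6)) := by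
    have hc := center_id x x⁻¹ (x^m) ((x⁻¹)^m) hxt hXT hR
    unfold s
    linear_combination -hc
  refine ⟨fun i => w i.val, ?_, ?_⟩
  · intro i
    show 0 < w (i : ℕ)
    have hi : (i : ℕ) < 1+1+2+(5+m) := i.isLt
    have hsp : ∀ a b : ℕ, 1 ≤ a → 1 ≤ b → ∀ c : ℕ, 1 ≤ c → 0 < s x a * s x b * s x c :=
      fun a b ha hb c hc => mul_pos (mul_pos (s_pos hx ha) (s_pos hx hb)) (s_pos hx hc)
    rcases lt_or_ge (i : ℕ) 4 with h4 | h4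
    · simp only [hwdef]
      interval_cases h : (i : ℕ) <;> simp only [Nat.reduceEqDiff, reduceIte] <;>
        exact hsp _ _ (by omega) (by omega) _ (by omega)
    · rw [hw4 _ h4]
      exact hsp _ _ (by omega) (by omega) _ (by omega)
  · funext i
    have hi : (i : ℕ) < 1+1+2+(5+m) := i.isLt
    show (treeMatrix 1 2 (5+m)).mulVec (fun i => w i.val) i = _
    simp only [Matrix.mulVec, dotProduct, treeMatrix, Matrix.of_apply, ite_mul, one_mul,
      zero_mul, Pi.smul_apply, smul_eq_mul]
    have step : (∑ j : Fin (1+1+2+(5+m)), (if armAdj 1 2 (i : ℕ) (j : ℕ) then w (j : ℕ) else 0))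
        = ∑ j ∈ Finset.range (1+1+2+(5+m)), (if armAdj 1 2 (i : ℕ) j then w j else 0) :=
      Fin.sum_univ_eq_sum_range (fun j => if armAdj 1 2 (i : ℕ) j then w j else 0) (1+1+2+(5+m))
    rw [step]
    by_cases h0 : (i : ℕ) = 0
    · rw [h0, sum_three _ 1 2 4 w (by omega) (by omega) (by omega) (by omega) (by omega) (by omega)
        (by intro j hj; unfold armAdj; omega)]
      have e4 : 9 + m - 4 = 5 + m := by omega
      norm_num [hwdef, e4]
      exact hcenter
    · by_cases h1 : (i : ℕ) = 1
      · rw [h1, sum_one _ 0 w (by omega) (by intro j hj; unfold armAdj; omega)]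
        norm_num [hwdef]
        linear_combination (-(s x 3 * s x (m+6))) * s_one_rec hx0
      · by_cases h2 : (i : ℕ) = 2
        · rw [h2, sum_two _ 0 3 w (by omega) (by omega) (by omega)
            (by intro j hj; unfold armAdj; omega)]
          norm_num [hwdef]
          linear_combination (-(s x 2 * s x (m+6))) * s_rec hx0 1
        · by_cases h3 : (i : ℕ) = 3
          · rw [h3, sum_one _ 2 w (by omega) (by intro j hj; unfold armAdj; omega)]
            norm_num [hwdef]
            linear_combination (-(s x 2 * s x (m+6))) * s_one_rec hx0
          · by_cases h4 : (i : ℕ) = 4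
            · rw [h4, sum_two _ 0 5 w (by omega) (by omega) (by omega)
                (by intro j hj; unfold armAdj; omega)]
              rw [hw4 5 (by omega), hw4 4 (by omega), hw0]
              have e5 : 9 + m - 5 = 4 + m := by omega
              have e4 : 9 + m - 4 = 4 + m + 1 := by omega
              have e6 : m + 6 = 4 + m + 2 := by omega
              rw [e5, e4, e6]
              linear_combination (-(s x 2 * s x 3)) * s_rec hx0 (4+m)
            · by_cases h8 : (i : ℕ) = 8 + m
              · rw [h8, sum_one _ (7+m) w (by omega) (by intro j hj; unfold armAdj; omega)]
                rw [hw4 _ (by omega), hw4 _ (by omega)]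
                have e7 : 9 + m - (7+m) = 2 := by omega
                have e8 : 9 + m - (8+m) = 1 := by omega
                rw [e7, e8]
                linear_combination (-(s x 2 * s x 3)) * s_one_rec hx0
              · -- generic interior vertex 5 ≤ i ≤ 7+m
                have h5 : 5 ≤ (i : ℕ) := by omega
                have h7 : (i : ℕ) ≤ 7 + m := by omega
                rw [sum_two _ ((i:ℕ)-1) ((i:ℕ)+1) w (by omega) (by omega) (by omega)
                  (by intro j hj; unfold armAdj; omega)]
                rw [hw4 _ (by omega), hw4 _ (by omega), hw4 _ (by omega)]
                have e1 : 9 + m - ((i:ℕ)+1) = 8 + m - (i:ℕ) := by omega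
                have e2 : 9 + m - (i:ℕ) = (8 + m - (i:ℕ)) + 1 := by omega
                have e3 : 9 + m - ((i:ℕ)-1) = (8 + m - (i:ℕ)) + 2 := by omega
                rw [e1, e2, e3]
                linear_combination (-(s x 2 * s x 3)) * s_rec hx0 (8 + m - (i:ℕ))

lemma perron {n : ℕ} (A : Matrix (Fin n) (Fin n) ℝ)
    (hA0 : ∀ i j, 0 ≤ A i j) (hAs : ∀ i j, A i j = A j i)
    {v : Fin n → ℝ} (hv : ∀ i, 0 < v i) {a : ℝ} (hva : A.mulVec v = a • v)
    {w : Fin n → ℝ} (hw : w ≠ 0) {b : ℝ} (hwb : A.mulVec w = b • w) : b ≤ a := by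
  classical
  set W : Fin n → ℝ := fun i => |w i| with hW
  have hmain : ∀ i, |b| * W i ≤ ∑ j, A i j * W j := by
    intro i
    have h1 : (∑ j, A i j * w j) = b * w i := by
      have h := congrFun hwb i
      simpa [Matrix.mulVec, dotProduct] using h
    calc |b| * W i = |∑ j, A i j * w j| := by rw [h1, abs_mul]
    _ ≤ ∑ j, |A i j * w j| := Finset.abs_sum_le_sum_abs _ _
    _ = ∑ j, A i j * W j := by
        refine Finset.sum_congr rfl fun j _ => ?_
        rw [abs_mul, abs_of_nonneg (hA0 i j)]
  have hS : 0 < ∑ i, v i * W i := by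
    obtain ⟨i0, hi0⟩ := Function.ne_iff.mp hw
    refine Finset.sum_pos' (fun i _ => mul_nonneg (hv i).le (abs_nonneg _))
      ⟨i0, Finset.mem_univ _, mul_pos (hv i0) (abs_pos.mpr hi0)⟩
  have hmv : ∀ j, (∑ i, A j i * v i) = a * v j := by
    intro j
    have h := congrFun hva j
    simpa [Matrix.mulVec, dotProduct] using h
  have hchain : |b| * (∑ i, v i * W i) ≤ a * (∑ i, v i * W i) := by
    calc |b| * (∑ i, v i * W i) = ∑ i, v i * (|b| * W i) := by
          rw [Finset.mul_sum]; exact Finset.sum_congr rfl fun i _ => by ring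
    _ ≤ ∑ i, v i * (∑ j, A i j * W j) :=
          Finset.sum_le_sum fun i _ => mul_le_mul_of_nonneg_left (hmain i) (hv i).le
    _ = ∑ j, (∑ i, A j i * v i) * W j := by
          simp_rw [Finset.mul_sum, Finset.sum_mul]
          rw [Finset.sum_comm]
          refine Finset.sum_congr rfl fun j _ => Finset.sum_congr rfl fun i _ => ?_
          rw [hAs j i]; ring
    _ = ∑ j, a * (v j * W j) := by
          refine Finset.sum_congr rfl fun j _ => ?_
          rw [hmv j]; ring
    _ = a * (∑ i, v i * W i) := by rw [← Finset.mul_sum]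
  have hb : |b| ≤ a := le_of_mul_le_mul_right (by simpa [mul_comm] using hchain) hS
  exact (le_abs_self b).trans hb

lemma lam_strict_mono {u v : ℝ} (hu : 1 < u) (huv : u < v) : u + u⁻¹ < v + v⁻¹ := by
  have hu0 : (0:ℝ) < u := by linarith
  have hv0 : (0:ℝ) < v := by linarith
  have hu0' : u ≠ 0 := hu0.ne'
  have hv0' : v ≠ 0 := hv0.ne'
  have hiu : u⁻¹ < 1 := inv_lt_one_of_one_lt₀ hu
  have hiv : v⁻¹ < 1 := inv_lt_one_of_one_lt₀ (by linarith)
  have hiu0 : (0:ℝ) < u⁻¹ := inv_pos.mpr hu0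
  have hiv0 : (0:ℝ) < v⁻¹ := inv_pos.mpr hv0
  have hp : 0 < (v - u) * (1 - u⁻¹ * v⁻¹) := by
    apply mul_pos (by linarith)
    nlinarith
  have he : v + v⁻¹ - (u + u⁻¹) = (v - u) * (1 - u⁻¹ * v⁻¹) := by
    field_simp
    ring
  linarith

end T23aux

open T23aux

/-- For every integer `m ≥ 1`, the polynomial
`x^{m+10} - x^{m+8} - x^{m+7} + x^3 + x^2 - 1` has a unique real root `α_m > 1`,
and the largest eigenvalue of the adjacency matrix of the tree `T_{2,3,6+m}`
equals `α_m^{1/2} + α_m^{-1/2}`. -/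
theorem T23m_largest_eigenvalue (m : ℕ) (hm : 1 ≤ m) :
    (∃! α : ℝ, 1 < α ∧
        α^(m+10) - α^(m+8) - α^(m+7) + α^3 + α^2 - 1 = 0) ∧
    ∀ α : ℝ, 1 < α → α^(m+10) - α^(m+8) - α^(m+7) + α^3 + α^2 - 1 = 0 →
      IsGreatest {μ : ℝ | ∃ v : Fin (1 + 1 + 2 + (5 + m)) → ℝ, v ≠ 0 ∧
          (treeMatrix 1 2 (5 + m)).mulVec v = μ • v}
        (Real.sqrt α + (Real.sqrt α)⁻¹) := by
  classical
  have hA0 : ∀ i j, 0 ≤ treeMatrix 1 2 (5+m) i j := by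
    intro i j
    simp only [treeMatrix, Matrix.of_apply]
    split_ifs <;> norm_num
  have hAs : ∀ i j, treeMatrix 1 2 (5+m) i j = treeMatrix 1 2 (5+m) j i := by
    intro i j
    simp only [treeMatrix, Matrix.of_apply]
    by_cases h : armAdj 1 2 (i : ℕ) (j : ℕ)
    · rw [if_pos h, if_pos ((armAdj_symm 1 2 _ _).mp h)]
    · rw [if_neg h, if_neg fun hh => h ((armAdj_symm 1 2 _ _).mp hh)]
  -- construction of the positive eigenvector for any root
  have build : ∀ α : ℝ, 1 < α → α^(m+10) - α^(m+8) - α^(m+7) + α^3 + α^2 - 1 = 0 →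
      ∃ v : Fin (1+1+2+(5+m)) → ℝ, (∀ i, 0 < v i) ∧
        (treeMatrix 1 2 (5+m)).mulVec v = (Real.sqrt α + (Real.sqrt α)⁻¹) • v := by
    intro α hα hroot
    have hα0 : (0:ℝ) ≤ α := by linarith
    have hx2 : Real.sqrt α ^ 2 = α := Real.sq_sqrt hα0
    have hx1 : 1 < Real.sqrt α := by
      rw [show (1:ℝ) = Real.sqrt 1 by simp]
      exact Real.sqrt_lt_sqrt (by norm_num) hα
    exact key_eig m (Real.sqrt α) hx1 (by rw [hx2]; exact hroot)
  -- existence of a root via IVT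
  have exroot : ∃ α : ℝ, 1 < α ∧ α^(m+10) - α^(m+8) - α^(m+7) + α^3 + α^2 - 1 = 0 := by
    set F : ℝ → ℝ := fun y => y^(m+10) - y^(m+8) - y^(m+7) + y^3 + y^2 - 1 with hF
    have hcont : Continuous F := by fun_prop
    have hF1 : F 1 = 0 := by simp [hF]
    have hD : HasDerivAt F (-(m : ℝ)) 1 := by
      have h := (((((hasDerivAt_pow (m+10) (1:ℝ)).sub (hasDerivAt_pow (m+8) 1)).sub
        (hasDerivAt_pow (m+7) 1)).add (hasDerivAt_pow 3 1)).add
        (hasDerivAt_pow 2 1)).sub_const 1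
      refine h.congr_deriv ?_
      simp only [one_pow]
      push_cast
      ring
    have hslope := hasDerivAt_iff_tendsto_slope.mp hD
    have hev : ∀ᶠ z in nhdsWithin (1:ℝ) {z | z ≠ 1}, slope F 1 z < 0 :=
      hslope.eventually_lt_const (by simp; exact_mod_cast hm)
    have hev2 : ∀ᶠ z in nhdsWithin (1:ℝ) (Set.Ioi 1), slope F 1 z < 0 :=
      hev.filter_mono (nhdsWithin_mono 1 fun z hz => LT.lt.ne' hz)
    have hev3 : ∀ᶠ z in nhdsWithin (1:ℝ) (Set.Ioi 1), z < 2 :=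
      Filter.eventually_of_mem (Ioo_mem_nhdsGT (by norm_num : (1:ℝ) < 2))
        fun z hz => hz.2
    have hev4 : ∀ᶠ z in nhdsWithin (1:ℝ) (Set.Ioi 1), (1:ℝ) < z :=
      Filter.eventually_of_mem self_mem_nhdsWithin fun z hz => hz
    obtain ⟨c, ⟨hcs, hc2⟩, hc1⟩ := ((hev2.and hev3).and hev4).exists
    have hFc : F c < 0 := by
      rw [slope_def_field, hF1, sub_zero] at hcs
      rcases div_neg_iff.mp hcs with ⟨h1, h2⟩ | ⟨h1, h2⟩
      · linarith
      · exact h1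
    have hF2 : 0 < F 2 := by
      have p1 : (2:ℝ)^(m+10) = 2^(m+7)*8 := by
        rw [show m+10 = m+7+3 by omega, pow_add]; norm_num
      have p2 : (2:ℝ)^(m+8) = 2^(m+7)*2 := by
        rw [show m+8 = m+7+1 by omega, pow_add]; norm_num
      have p3 : (0:ℝ) < 2^(m+7) := by positivity
      simp only [hF]
      rw [p1, p2]
      nlinarith
    have hsub := intermediate_value_Icc hc2.le hcont.continuousOn
    obtain ⟨α, hαmem, hαval⟩ := hsub ⟨hFc.le, hF2.le⟩
    exact ⟨α, by linarith [hαmem.1], hαval⟩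
  obtain ⟨α₀, hα₀, hroot₀⟩ := exroot
  -- a positive vector is nonzero
  have posne : ∀ v : Fin (1+1+2+(5+m)) → ℝ, (∀ i, 0 < v i) → v ≠ 0 := by
    intro v hv h
    exact absurd (congrFun h ⟨0, by omega⟩) (hv _).ne'
  have uniq : ∀ β : ℝ, 1 < β → β^(m+10) - β^(m+8) - β^(m+7) + β^3 + β^2 - 1 = 0 → β = α₀ := by
    intro β hβ hrootβ
    obtain ⟨v, hv, hveq⟩ := build α₀ hα₀ hroot₀
    obtain ⟨u, hu, hueq⟩ := build β hβ hrootβ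
    have h1 : Real.sqrt β + (Real.sqrt β)⁻¹ ≤ Real.sqrt α₀ + (Real.sqrt α₀)⁻¹ :=
      perron _ hA0 hAs hv hveq (posne u hu) hueq
    have h2 : Real.sqrt α₀ + (Real.sqrt α₀)⁻¹ ≤ Real.sqrt β + (Real.sqrt β)⁻¹ :=
      perron _ hA0 hAs hu hueq (posne v hv) hveq
    have hsb : 1 < Real.sqrt β := by
      rw [show (1:ℝ) = Real.sqrt 1 by simp]
      exact Real.sqrt_lt_sqrt (by norm_num) hβ
    have hsa : 1 < Real.sqrt α₀ := by
      rw [show (1:ℝ) = Real.sqrt 1 by simp]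
      exact Real.sqrt_lt_sqrt (by norm_num) hα₀
    have hss : Real.sqrt β = Real.sqrt α₀ := by
      by_contra hne
      rcases lt_or_gt_of_ne hne with hlt | hgt
      · exact absurd (lam_strict_mono hsb hlt) (by linarith)
      · exact absurd (lam_strict_mono hsa hgt) (by linarith)
    calc β = Real.sqrt β ^ 2 := (Real.sq_sqrt (by linarith)).symm
    _ = Real.sqrt α₀ ^ 2 := by rw [hss]
    _ = α₀ := Real.sq_sqrt (by linarith)
  constructor
  · exact ⟨α₀, ⟨hα₀, hroot₀⟩, fun β hβ => uniq β hβ.1 hβ.2⟩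
  · intro α hα hroot
    obtain ⟨v, hv, hveq⟩ := build α hα hroot
    constructor
    · exact ⟨v, posne v hv, hveq⟩
    · rintro μ ⟨u, hu, hueq⟩
      exact perron _ hA0 hAs hv hveq hu hueq
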